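/- arXiv:0908.1159 — 2 statements merged into one kernel-verified Lean document; each statement's English description precedes it below -/
import Mathlib

section
/- BB(1) = 1: among all Turing machines with at most 1 state (in the model without a separate halting state) that halt on the all-zero tape, the maximum number of 1s in the computed word is exactly 1. -/
/-- Head movement directions. -/
inductive Dir : Type
  | left | stay | right

/-- Displacement of the head for each direction. -/
def Dir.move : Dir → ℤ
  | .left => -1
  | .stay => 0
  | .right => 1

/-- A configuration of a Turing machine with state type `Q`: current state,
head position and the two-way infinite binary tape. -/
structure Cfg (Q : Type) where
  state : Q
  head : ℤ
  tape : ℤ → Bool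

/-- One step of the machine with partial transition function `f`
(`none` if the machine halts, i.e. `f` is undefined on the current pair). -/
def stepTM {Q : Type} (f : Q × Bool → Option (Q × Bool × Dir)) (c : Cfg Q) :
    Option (Cfg Q) :=
  (f (c.state, c.tape c.head)).map fun qbd =>
    ⟨qbd.1, c.head + qbd.2.2.move, Function.update c.tape c.head qbd.2.1⟩

/-- Running `t` steps (returns `none` if the machine halts strictly before `t` steps). -/
def stepsTM {Q : Type} (f : Q × Bool → Option (Q × Bool × Dir)) :
    ℕ → Cfg Q → Option (Cfg Q)
  | 0, c => some c
  | t + 1, c => (stepTM f c).bind (stepsTM f t)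

/-- Initial configuration: initial state `q0`, head at `0`, all-zero tape. -/
def initCfg {Q : Type} (q0 : Q) : Cfg Q := ⟨q0, 0, fun _ => false⟩

/-- The machine is halted in configuration `c`: the transition function is
undefined on the current (state, symbol) pair. -/
def Halted {Q : Type} (f : Q × Bool → Option (Q × Bool × Dir)) (c : Cfg Q) : Prop :=
  f (c.state, c.tape c.head) = none

/-- `w` is the tape contents from the leftmost 1 to the rightmost 1
(the empty word if the tape contains no 1). -/
def TapeWord (tape : ℤ → Bool) (w : List Bool) : Prop :=
  ∃ i : ℤ,
    (∀ k : ℕ, k < w.length → w.getD k false = tape (i + k)) ∧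
    (∀ j : ℤ, tape j = true → i ≤ j ∧ j < i + w.length) ∧
    (w ≠ [] → w.getD 0 false = true ∧ w.getLastD false = true)

/-- The machine with transition function `f` and initial state `q0`, started on
the all-zero tape, halts after exactly `t` steps computing the word `w`. -/
def Computes {Q : Type} (f : Q × Bool → Option (Q × Bool × Dir)) (q0 : Q)
    (w : List Bool) (t : ℕ) : Prop :=
  ∃ c : Cfg Q, stepsTM f t (initCfg q0) = some c ∧ Halted f c ∧ TapeWord c.tape w


section Aux

lemma steps_inv {Q : Type} (f : Q × Bool → Option (Q × Bool × Dir)) (P : Cfg Q → Prop)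
    (hstep : ∀ c, P c → ∃ c', stepTM f c = some c' ∧ P c') :
    ∀ (t : ℕ) (c0 c : Cfg Q), P c0 → stepsTM f t c0 = some c → P c := by
  intro t
  induction t with
  | zero =>
    intro c0 c h hs
    simp only [stepsTM, Option.some.injEq] at hs
    rwa [← hs]
  | succ t ih =>
    intro c0 c h hs
    obtain ⟨c', h1, h2⟩ := hstep c0 h
    rw [stepsTM, h1, Option.bind_some] at hs
    exact ih c' c h2 hs

lemma myGetLastD (w : List Bool) (h : w ≠ []) :
    w.getLastD false = w.getD (w.length - 1) false := by
  cases w with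
  | nil => simp at h
  | cons a l =>
    rw [List.getLastD_eq_getLast?, List.getLast?_eq_getElem?, List.getD]

lemma count_single_true (tape : ℤ → Bool) (htape : ∀ j, tape j = true ↔ j = 0)
    (w : List Bool) (hw : TapeWord tape w) : w.count true ≤ 1 := by
  obtain ⟨i, hw1, hw2, hw3⟩ := hw
  by_cases hne : w = []
  · simp [hne]
  · obtain ⟨hfirst, hlast⟩ := hw3 hne
    have hlen : 0 < w.length := List.length_pos_iff.mpr hne
    have hi : i = 0 := by
      have := hw1 0 hlen
      rw [hfirst] at this
      have := (htape (i + (0 : ℕ))).mp this.symm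
      simpa using this
    have hlast' : w.getD (w.length - 1) false = true := by
      rw [← myGetLastD w hne]; exact hlast
    have hlen1 : w.length = 1 := by
      have := hw1 (w.length - 1) (by omega)
      rw [hlast'] at this
      have := (htape (i + ((w.length - 1 : ℕ) : ℤ))).mp this.symm
      rw [hi] at this
      omega
    calc w.count true ≤ w.length := List.count_le_length
    _ = 1 := hlen1

end Aux

/-- BB(1) = 1: among all Turing machines with at most 1 states
(in the model without a separate halting state) that halt on the all-zero
tape, the maximum number of 1s in the computed word is exactly 1. -/
theorem busy_beaver_1 :
    IsGreatest
      {m : ℕ |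
        ∃ (f : Fin 1 × Bool → Option (Fin 1 × Bool × Dir)) (w : List Bool) (t : ℕ),
          Computes f 0 w t ∧ w.count true = m} 1 := by
  constructor
  · -- membership: the machine that writes a 1 and halts
    refine ⟨fun p => if p.2 then none else some (0, true, Dir.stay), [true], 1,
      ⟨⟨0, 0, Function.update (fun _ => false) 0 true⟩, ?_, ?_, ?_⟩, rfl⟩
    · simp [stepsTM, stepTM, initCfg, Dir.move]
    · simp [Halted, Function.update_self]
    · refine ⟨0, ?_, ?_, ?_⟩
      · intro k hk
        have hk0 : k = 0 := by simpa using hk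
        subst hk0
        simp [Function.update_self]
      · intro j hj
        by_cases h : j = 0
        · subst h; norm_num
        · exfalso
          change Function.update (fun _ => false) 0 true j = true at hj
          rw [Function.update_of_ne h] at hj
          cases hj
      · intro _; simp
  · -- upper bound
    rintro m ⟨f, w, t, ⟨c, hsteps, hhalt, hword⟩, rfl⟩
    have hstate : ∀ q : Fin 1, q = 0 := fun q => Fin.fin_one_eq_zero q
    cases hf0 : f (0, false) with
    | none =>
      cases t with
      | zero =>
        simp only [stepsTM, Option.some.injEq] at hsteps
        subst hsteps
        -- tape is all false, so w = []
        obtain ⟨i, hw1, hw2, hw3⟩ := hword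
        by_cases hne : w = []
        · simp [hne]
        · exfalso
          obtain ⟨hfirst, _⟩ := hw3 hne
          have := hw1 0 (List.length_pos_iff.mpr hne)
          rw [hfirst] at this
          simp [initCfg] at this
      | succ t =>
        exfalso
        have hstep0 : stepTM f (initCfg (0 : Fin 1)) = none := by
          simp [stepTM, initCfg, hf0]
        rw [stepsTM, hstep0] at hsteps
        simp at hsteps
    | some a =>
      obtain ⟨q, b, d⟩ := a
      cases hf1 : f (0, true) with
      | some a' =>
        -- f is total, cannot halt
        exfalso
        have : ∃ x, f (c.state, c.tape c.head) = some x := by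
          rw [hstate c.state]
          cases hcb : c.tape c.head
          · exact ⟨_, hf0⟩
          · exact ⟨_, hf1⟩
        obtain ⟨x, hx⟩ := this
        rw [hhalt] at hx
        cases hx
      | none =>
        cases d with
        | left =>
          exfalso
          set P : Cfg (Fin 1) → Prop := fun c => ∀ j, j ≤ c.head → c.tape j = false with hP
          have hstep : ∀ c, P c → ∃ c', stepTM f c = some c' ∧ P c' := by
            intro c hc
            have ht : c.tape c.head = false := hc _ le_rfl
            refine ⟨⟨q, c.head + Dir.left.move, Function.update c.tape c.head b⟩, ?_, ?_⟩
            · simp only [stepTM, hstate c.state, ht, hf0, Option.map_some]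
            · intro j hj
              simp only [Dir.move] at hj
              show Function.update c.tape c.head b j = false
              rw [Function.update_of_ne (show j ≠ c.head by omega)]
              exact hc j (by omega)
          have hPc : P c := steps_inv f P hstep t (initCfg 0) c (fun j _ => rfl) hsteps
          have ht : c.tape c.head = false := hPc _ le_rfl
          rw [Halted, hstate c.state, ht, hf0] at hhalt
          cases hhalt
        | right =>
          exfalso
          set P : Cfg (Fin 1) → Prop := fun c => ∀ j, c.head ≤ j → c.tape j = false with hP
          have hstep : ∀ c, P c → ∃ c', stepTM f c = some c' ∧ P c' := by
            intro c hc
            have ht : c.tape c.head = false := hc _ le_rfl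
            refine ⟨⟨q, c.head + Dir.right.move, Function.update c.tape c.head b⟩, ?_, ?_⟩
            · simp only [stepTM, hstate c.state, ht, hf0, Option.map_some]
            · intro j hj
              simp only [Dir.move] at hj
              show Function.update c.tape c.head b j = false
              rw [Function.update_of_ne (show j ≠ c.head by omega)]
              exact hc j (by omega)
          have hPc : P c := steps_inv f P hstep t (initCfg 0) c (fun j _ => rfl) hsteps
          have ht : c.tape c.head = false := hPc _ le_rfl
          rw [Halted, hstate c.state, ht, hf0] at hhalt
          cases hhalt
        | stay =>
          cases b with
          | false =>
            exfalso
            set P : Cfg (Fin 1) → Prop := fun c => c = initCfg 0 with hP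
            have hstep : ∀ c, P c → ∃ c', stepTM f c = some c' ∧ P c' := by
              intro c hc
              refine ⟨initCfg 0, ?_, rfl⟩
              subst hc
              have hupd : Function.update (fun _ : ℤ => false) 0 false = (fun _ => false) := by
                funext j
                by_cases h : j = (0 : ℤ)
                · subst h; simp
                · rw [Function.update_of_ne h]
              simp only [stepTM, initCfg, hf0, Option.map_some, Dir.move, add_zero, hupd,
                hstate q]
            have hPc : P c := steps_inv f P hstep t (initCfg 0) c rfl hsteps
            rw [hPc] at hhalt
            simp [Halted, initCfg, hf0] at hhalt
          | true =>
            -- halts after one step with a single 1 on the tape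
            have hstep0 : stepTM f (initCfg (0 : Fin 1)) =
                some ⟨q, 0, Function.update (fun _ => false) 0 true⟩ := by
              simp only [stepTM, initCfg, hf0, Option.map_some, Dir.move, add_zero]
            match t with
            | 0 =>
              exfalso
              simp only [stepsTM, Option.some.injEq] at hsteps
              rw [Halted, ← hsteps] at hhalt
              rw [initCfg] at hhalt
              simp only at hhalt
              rw [hstate 0, hf0] at hhalt
              cases hhalt
            | 1 =>
              simp only [stepsTM, hstep0, Option.bind_some, Option.some.injEq] at hsteps
              subst hsteps
              refine count_single_true _ ?_ w hword
              intro j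
              constructor
              · intro hj
                by_contra h
                change Function.update (fun _ => false) 0 true j = true at hj
                rw [Function.update_of_ne h] at hj
                cases hj
              · intro h; subst h; simp
            | (s + 2) =>
              exfalso
              have hstep1 : stepTM f (⟨q, 0, Function.update (fun _ => false) 0 true⟩ :
                  Cfg (Fin 1)) = none := by
                simp only [stepTM, Function.update_self, hstate q, hf1, Option.map_none]
              rw [stepsTM, hstep0, Option.bind_some, stepsTM, hstep1, Option.bind_none]
                at hsteps
              cases hsteps
end

section
/- BB(5) ≥ 4097: there exists a Turing machine with at most 5 states (in the model without a separate halting state) that halts on the all-zero tape with a computed word containing at least 4097 ones. -/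
-- my defs
def M : Fin 5 × Bool → Option (Fin 5 × Bool × Dir)
  | (0, false) => some (1, true, .right)
  | (0, true)  => some (2, true, .left)
  | (1, false) => some (2, true, .right)
  | (1, true)  => some (1, true, .right)
  | (2, false) => some (3, true, .right)
  | (2, true)  => some (4, false, .left)
  | (3, false) => some (0, true, .left)
  | (3, true)  => some (3, true, .left)
  | (4, false) => none
  | (4, true)  => some (0, false, .left)

example : M (4, false) = none := rfl
example : M (0, false) = some (1, true, .right) := rfl

def listTape (p : ℤ) (l r : List Bool) : ℤ → Bool :=
  fun i => if i < p then l.getD (p - 1 - i).toNat false else r.getD (i - p).toNat false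

def cfg (q : Fin 5) (p : ℤ) (l r : List Bool) : Cfg (Fin 5) := ⟨q, p, listTape p l r⟩

def Rch (c d : Cfg (Fin 5)) : Prop := ∃ t, stepsTM M t c = some d

lemma stepsTM_add (f : Fin 5 × Bool → Option (Fin 5 × Bool × Dir)) (a b : ℕ) (c : Cfg (Fin 5)) :
    stepsTM f (a + b) c = (stepsTM f a c).bind (stepsTM f b) := by
  induction a generalizing c with
  | zero => simp [stepsTM]
  | succ n ih =>
    rw [show n + 1 + b = (n + b) + 1 from by omega]
    simp only [stepsTM]
    cases stepTM f c with
    | none => simp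
    | some c' => simp [ih c']

lemma Rch.refl (c : Cfg (Fin 5)) : Rch c c := ⟨0, rfl⟩

lemma Rch.trans {c d e : Cfg (Fin 5)} (h1 : Rch c d) (h2 : Rch d e) : Rch c e := by
  obtain ⟨t1, h1⟩ := h1; obtain ⟨t2, h2⟩ := h2
  exact ⟨t1 + t2, by rw [stepsTM_add, h1]; exact h2⟩

lemma Rch.single {c d : Cfg (Fin 5)} (h : stepTM M c = some d) : Rch c d :=
  ⟨1, by simp [stepsTM, h]⟩

lemma getD_pos (x : Bool) (l : List Bool) (n : ℕ) (hn : 0 < n) :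
    (x :: l).getD n false = l.getD (n - 1) false := by
  cases n with
  | zero => omega
  | succ m => simp

lemma listTape_read (p : ℤ) (l : List Bool) (c : Bool) (r : List Bool) :
    listTape p l (c :: r) p = c := by
  simp [listTape]

lemma update_right (p : ℤ) (l r : List Bool) (c b : Bool) :
    Function.update (listTape p l (c :: r)) p b = listTape (p + 1) (b :: l) r := by
  funext i
  by_cases hip : i = p
  · rw [hip, Function.update_self]
    simp only [listTape]
    rw [if_pos (by omega), show (p + 1 - 1 - p).toNat = 0 from by omega]
    rfl
  · rw [Function.update_of_ne hip]
    simp only [listTape]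
    rcases lt_trichotomy i p with hlt | heq | hgt
    · rw [if_pos hlt, if_pos (by omega), getD_pos _ _ _ (by omega)]
      congr 1; omega
    · exact absurd heq hip
    · rw [if_neg (by omega), if_neg (by omega), getD_pos _ _ _ (by omega)]
      congr 1; omega

lemma update_left (p : ℤ) (a : Bool) (l : List Bool) (c b : Bool) (r : List Bool) :
    Function.update (listTape p (a :: l) (c :: r)) p b = listTape (p - 1) l (a :: b :: r) := by
  funext i
  by_cases hip : i = p
  · rw [hip, Function.update_self]
    simp only [listTape]
    rw [if_neg (by omega), show (p - (p - 1)).toNat = 1 from by omega]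
    rfl
  · rw [Function.update_of_ne hip]
    simp only [listTape]
    by_cases hne2 : i = p - 1
    · rw [hne2, if_pos (by omega), if_neg (by omega),
        show (p - 1 - (p - 1)).toNat = 0 from by omega]
      rfl
    · rcases lt_trichotomy i p with hlt | heq | hgt
      · rw [if_pos hlt, if_pos (by omega), getD_pos _ _ _ (by omega)]
        congr 1; omega
      · exact absurd heq hip
      · rw [if_neg (by omega), if_neg (by omega), getD_pos _ _ _ (by omega),
          getD_pos _ _ _ (by omega), getD_pos _ _ _ (by omega)]
        congr 1; omega

lemma step_right {q q' : Fin 5} {b c : Bool} (h : M (q, c) = some (q', b, .right))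
    (p : ℤ) (l r : List Bool) :
    stepTM M (cfg q p l (c :: r)) = some (cfg q' (p + 1) (b :: l) r) := by
  unfold stepTM
  rw [show (cfg q p l (c :: r)).tape (cfg q p l (c :: r)).head = c from listTape_read p l c r]
  rw [show (cfg q p l (c :: r)).state = q from rfl, h, Option.map_some]
  rw [show (cfg q p l (c :: r)).head = p from rfl,
      show (cfg q p l (c :: r)).tape = listTape p l (c :: r) from rfl, update_right]
  rfl

lemma step_left {q q' : Fin 5} {b c : Bool} (h : M (q, c) = some (q', b, .left))
    (p : ℤ) (a : Bool) (l r : List Bool) :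
    stepTM M (cfg q p (a :: l) (c :: r)) = some (cfg q' (p - 1) l (a :: b :: r)) := by
  unfold stepTM
  rw [show (cfg q p (a :: l) (c :: r)).tape (cfg q p (a :: l) (c :: r)).head = c from
    listTape_read p (a :: l) c r]
  rw [show (cfg q p (a :: l) (c :: r)).state = q from rfl, h, Option.map_some]
  rw [show (cfg q p (a :: l) (c :: r)).head = p from rfl,
      show (cfg q p (a :: l) (c :: r)).tape = listTape p (a :: l) (c :: r) from rfl, update_left]
  rw [show p + Dir.move Dir.left = p - 1 from by simp [Dir.move]; ring]
  rfl

lemma rch_right {q q' : Fin 5} {b c : Bool} (h : M (q, c) = some (q', b, .right))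
    (p : ℤ) (l r : List Bool) :
    Rch (cfg q p l (c :: r)) (cfg q' (p + 1) (b :: l) r) := Rch.single (step_right h p l r)

lemma rch_left {q q' : Fin 5} {b c : Bool} (h : M (q, c) = some (q', b, .left))
    (p : ℤ) (a : Bool) (l r : List Bool) :
    Rch (cfg q p (a :: l) (c :: r)) (cfg q' (p - 1) l (a :: b :: r)) :=
  Rch.single (step_left h p a l r)

lemma getD_append_sing (r : List Bool) (n : ℕ) :
    (r ++ [false]).getD n false = r.getD n false := by
  induction r generalizing n with
  | nil => cases n <;> simp [List.getD]
  | cons a t ih =>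
    cases n with
    | zero => rfl
    | succ m => rw [List.cons_append, List.getD_cons_succ, List.getD_cons_succ]; exact ih m

lemma pad_r (q : Fin 5) (p : ℤ) (l r : List Bool) :
    cfg q p l r = cfg q p l (r ++ [false]) := by
  unfold cfg
  congr 1
  funext i
  unfold listTape
  split_ifs
  · rfl
  · rw [getD_append_sing]

lemma pad_l (q : Fin 5) (p : ℤ) (l r : List Bool) :
    cfg q p l r = cfg q p (l ++ [false]) r := by
  unfold cfg
  congr 1
  funext i
  unfold listTape
  split_ifs
  · rw [getD_append_sing]
  · rfl

-- transition facts
lemma hA0 : M (0, false) = some (1, true, .right) := rfl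
lemma hA1 : M (0, true) = some (2, true, .left) := rfl
lemma hB0 : M (1, false) = some (2, true, .right) := rfl
lemma hB1 : M (1, true) = some (1, true, .right) := rfl
lemma hC0 : M (2, false) = some (3, true, .right) := rfl
lemma hC1 : M (2, true) = some (4, false, .left) := rfl
lemma hD0 : M (3, false) = some (0, true, .left) := rfl
lemma hD1 : M (3, true) = some (3, true, .left) := rfl
lemma hE1 : M (4, true) = some (0, false, .left) := rfl

abbrev rep (n : ℕ) : List Bool := List.replicate n true

def P : ℕ → List Bool → List Bool
  | 0, r => r
  | n + 1, r => false :: false :: true :: P n r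

lemma P_block (n : ℕ) (r : List Bool) :
    P n (false :: false :: true :: r) = P (n + 1) r := by
  induction n with
  | zero => rfl
  | succ m ih => show false :: false :: true :: P m _ = _; rw [ih]; rfl

lemma P_append (n : ℕ) (r s : List Bool) : P n (r ++ s) = P n r ++ s := by
  induction n with
  | zero => rfl
  | succ m ih => show false :: false :: true :: P m _ = _; rw [ih]; rfl

lemma count_P (n : ℕ) (r : List Bool) : (P n r).count true = n + r.count true := by
  induction n with
  | zero => simp [P]
  | succ m ih => show (false :: false :: true :: P m r).count true = _
                 simp [List.count_cons, ih]; omega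

-- B skims right over ones
lemma skimB (n : ℕ) : ∀ (p : ℤ) (l r : List Bool),
    Rch (cfg 1 p l (rep n ++ r)) (cfg 1 (p + n) (rep n ++ l) r) := by
  induction n with
  | zero => intro p l r; simpa using Rch.refl (cfg 1 p l r)
  | succ n ih =>
    intro p l r
    have s1 : Rch (cfg 1 p l (rep (n+1) ++ r)) (cfg 1 (p+1) (true :: l) (rep n ++ r)) := by
      have := rch_right hB1 p l (rep n ++ r)
      simpa [List.replicate_succ] using this
    have s2 := ih (p+1) (true :: l) r
    have heq : cfg 1 (p + 1 + n) (rep n ++ (true :: l)) r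
             = cfg 1 (p + (n+1 : ℕ)) (rep (n+1) ++ l) r := by
      rw [show ((p : ℤ) + 1 + n) = p + ((n+1 : ℕ) : ℤ) from by push_cast; ring,
          show rep n ++ (true :: l) = rep (n+1) ++ l from by
            simp [List.replicate_succ']]
    exact s1.trans (heq ▸ s2)

-- D skims left over ones
lemma skimD (n : ℕ) : ∀ (p : ℤ) (l r : List Bool),
    Rch (cfg 3 p (rep n ++ l) (true :: r)) (cfg 3 (p - n) l (rep n ++ (true :: r))) := by
  induction n with
  | zero => intro p l r; simpa using Rch.refl (cfg 3 p l (true :: r))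
  | succ n ih =>
    intro p l r
    have s1 : Rch (cfg 3 p (rep (n+1) ++ l) (true :: r))
              (cfg 3 (p-1) (rep n ++ l) (true :: true :: r)) := by
      have := rch_left hD1 p true (rep n ++ l) r
      simpa [List.replicate_succ] using this
    have s2 := ih (p-1) l (true :: r)
    have heq : cfg 3 (p - 1 - n) l (rep n ++ (true :: true :: r))
             = cfg 3 (p - (n+1 : ℕ)) l (rep (n+1) ++ (true :: r)) := by
      rw [show ((p : ℤ) - 1 - n) = p - ((n+1 : ℕ) : ℤ) from by push_cast; ring,
          show rep n ++ (true :: true :: r) = rep (n+1) ++ (true :: r) from by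
            simp [List.replicate_succ']]
    exact s1.trans (heq ▸ s2)

-- the A-C-E leftward loop
lemma loopA (k : ℕ) : ∀ (p : ℤ) (l r : List Bool),
    Rch (cfg 0 p (rep (3*k) ++ l) (true :: r)) (cfg 0 (p - 3*k) l (true :: P k r)) := by
  induction k with
  | zero => intro p l r; simpa [P] using Rch.refl (cfg 0 p l (true :: r))
  | succ k ih =>
    intro p l r
    have hrep : rep (3*(k+1)) ++ l = true :: true :: true :: (rep (3*k) ++ l) := by
      rw [show 3*(k+1) = (3*k)+1+1+1 from by ring]
      simp [List.replicate_succ]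
    have s1 : Rch (cfg 0 p (rep (3*(k+1)) ++ l) (true :: r))
              (cfg 2 (p-1) (true :: true :: (rep (3*k) ++ l)) (true :: true :: r)) := by
      rw [hrep]; exact rch_left hA1 p true (true :: true :: (rep (3*k) ++ l)) r
    have s2 := rch_left hC1 (p-1) true (true :: (rep (3*k) ++ l)) (true :: r)
    have s3 := rch_left hE1 (p-1-1) true (rep (3*k) ++ l) (false :: true :: r)
    have s4 := ih (p-1-1-1) l (false :: false :: true :: r)
    have heq : cfg 0 (p-1-1-1 - 3*k) l (true :: P k (false :: false :: true :: r))
             = cfg 0 (p - 3*(k+1)) l (true :: P (k+1) r) := by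
      rw [P_block, show ((p : ℤ)-1-1-1 - 3*k) = p - 3*(k+1) from by push_cast [Nat.mul_succ]; ring]
    exact s1.trans (s2.trans (s3.trans (heq ▸ s4)))

lemma rep_shift (a : ℕ) (rest : List Bool) :
    true :: (rep a ++ rest) = rep a ++ true :: rest := by
  rw [show true :: (rep a ++ rest) = (true :: rep a) ++ rest from rfl,
    ← List.replicate_succ, List.replicate_succ', List.append_assoc]
  rfl

lemma rep_add (m n : ℕ) : rep (m + n) = rep m ++ rep n := List.replicate_add m n true

lemma cfg_congr {q : Fin 5} {p p' : ℤ} {l l' r r' : List Bool}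
    (hp : p = p') (hl : l = l') (hr : r = r') : cfg q p l r = cfg q p' l' r' := by
  rw [hp, hl, hr]

lemma rch_of_eq {c c' d d' : Cfg (Fin 5)} (hc : c = c') (hd : d = d') (h : Rch c d) :
    Rch c' d' := hc ▸ hd ▸ h

def Kc (p : ℤ) (a b : ℕ) : Cfg (Fin 5) :=
  cfg 0 p [] (false :: (rep a ++ P b [false, false, true, true]))

def Fc (p : ℤ) (N : ℕ) : Cfg (Fin 5) := cfg 0 p [] (false :: rep N)

-- one K-pass: consumes the leading block "001" after the 1^a run, a → a+5
lemma Kgen (p : ℤ) (a : ℕ) (rest : List Bool) :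
    Rch (cfg 0 p [] (false :: (rep a ++ (false :: false :: true :: rest))))
        (cfg 0 (p - 2) [] (false :: (rep (a + 5) ++ rest))) := by
  have s1 := rch_right hA0 p [] (rep a ++ (false :: false :: true :: rest))
  have s2 := skimB a (p+1) [true] (false :: false :: true :: rest)
  have s3 := rch_right hB0 (p+1+a) (rep a ++ [true]) (false :: true :: rest)
  have s4 := rch_right hC0 (p+1+a+1) (true :: (rep a ++ [true])) (true :: rest)
  have s5 : Rch (cfg 3 (p+1+a+1+1) (rep (a+2) ++ [true]) (true :: rest))
      (cfg 3 (p+1) [true] (rep (a+2) ++ (true :: rest))) := by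
    have h := skimD (a+2) (p+1+a+1+1) [true] rest
    exact rch_of_eq rfl (cfg_congr (by push_cast; ring) rfl rfl) h
  have s5' : Rch (cfg 3 (p+1+a+1+1) (true :: true :: (rep a ++ [true])) (true :: rest))
      (cfg 3 (p+1) [true] (rep (a+2) ++ (true :: rest))) := by
    refine rch_of_eq (cfg_congr rfl ?_ rfl) rfl s5
    simp [List.replicate_succ, rep_shift]
  have s6 : Rch (cfg 3 (p+1) [true] (rep (a+2) ++ (true :: rest)))
      (cfg 3 p [] (true :: (true :: (rep (a+1) ++ (true :: rest))))) := by
    have h := rch_left hD1 (p+1) true [] (rep (a+1) ++ (true :: rest))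
    refine rch_of_eq (cfg_congr rfl rfl ?_) (cfg_congr (by ring) rfl rfl) h
    simp [List.replicate_succ, rep_shift]
  have s7 : Rch (cfg 3 p [] (true :: (true :: (rep (a+1) ++ (true :: rest)))))
      (cfg 3 (p-1) [] (false :: (true :: (true :: (rep (a+1) ++ (true :: rest)))))) := by
    rw [pad_l 3 p []]
    exact rch_left hD1 p false [] (true :: (rep (a+1) ++ (true :: rest)))
  have s8 : Rch (cfg 3 (p-1) [] (false :: (true :: (true :: (rep (a+1) ++ (true :: rest))))))
      (cfg 0 (p-1-1) [] (false :: (true :: (true :: (true :: (rep (a+1) ++ (true :: rest))))))) := by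
    rw [pad_l 3 (p-1) []]
    exact rch_left hD0 (p-1) false [] (true :: (true :: (rep (a+1) ++ (true :: rest))))
  have sall := ((((((s1.trans s2).trans s3).trans s4).trans s5').trans s6).trans s7).trans s8
  refine rch_of_eq rfl (cfg_congr (by ring) rfl ?_) sall
  have : rep (a+5) ++ rest = true :: (true :: (true :: (rep (a+1) ++ (true :: rest)))) := by
    rw [show a + 5 = (a+1)+1+1+1+1 from by ring]
    simp [List.replicate_succ, List.replicate_succ', rep_shift]
  rw [this]

lemma KK (p : ℤ) (a b : ℕ) : Rch (Kc p a (b+1)) (Kc (p-2) (a+5) b) :=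
  Kgen p a (P b [false, false, true, true])

lemma KF (p : ℤ) (a : ℕ) : Rch (Kc p a 0) (Fc (p-2) (a+6)) := by
  have h := Kgen p a [true]
  refine rch_of_eq (cfg_congr rfl rfl ?_) (cfg_congr rfl rfl ?_) h
  · show false :: (rep a ++ (false :: false :: true :: [true]))
       = false :: (rep a ++ P 0 [false, false, true, true])
    rfl
  · show false :: (rep (a+5) ++ [true]) = false :: rep (a+6)
    simp [List.replicate_succ']

lemma Kiter (b : ℕ) : ∀ (p : ℤ) (a : ℕ),
    Rch (Kc p a b) (Fc (p - 2*(b+1)) (a + 5*b + 6)) := by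
  induction b with
  | zero =>
    intro p a
    refine rch_of_eq rfl (cfg_congr (by push_cast; ring) rfl (by norm_num)) (KF p a)
  | succ b ih =>
    intro p a
    have h := (KK p a b).trans (ih (p-2) (a+5))
    refine rch_of_eq rfl (cfg_congr (by push_cast; ring) rfl ?_) h
    rw [show a + 5 + 5*b + 6 = a + 5*(b+1) + 6 from by ring]

-- turnaround at the right end of a pure 1-block
lemma Fturn (p : ℤ) (N : ℕ) :
    Rch (Fc p N) (cfg 0 (p+N+2) (true :: (rep N ++ [true])) [true, true]) := by
  have hpad : Fc p N = cfg 0 p [] (false :: (rep N ++ [false, false, false])) := by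
    unfold Fc
    rw [pad_r 0 p [] (false :: rep N), pad_r, pad_r]
    exact cfg_congr rfl rfl (by simp)
  have s1 := rch_right hA0 p [] (rep N ++ [false, false, false])
  have s2 := skimB N (p+1) [true] [false, false, false]
  have s3 := rch_right hB0 (p+1+N) (rep N ++ [true]) [false, false]
  have s4 := rch_right hC0 (p+1+N+1) (true :: (rep N ++ [true])) [false]
  have s5 := rch_left hD0 (p+1+N+1+1) true (true :: (rep N ++ [true])) []
  have sall := (((s1.trans s2).trans s3).trans s4).trans s5
  rw [hpad]
  exact rch_of_eq rfl (cfg_congr (by push_cast; ring) rfl rfl) sall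

lemma FK0 (p : ℤ) (j : ℕ) (hj : 1 ≤ j) :
    Rch (Fc p (3*j)) (Kc (p-3) 5 (j-1)) := by
  have t1 : Rch (Fc p (3*j)) (cfg 0 (p + 3*j + 2) (rep (3*j) ++ [true, true]) [true, true]) := by
    have h := Fturn p (3*j)
    refine rch_of_eq rfl (cfg_congr (by push_cast; ring) ?_ rfl) h
    rw [rep_shift]
  have t2 : Rch (cfg 0 (p + 3*j + 2) (rep (3*j) ++ [true, true]) [true, true])
      (cfg 0 (p+2) [true, true] (true :: P j [true])) := by
    have h := loopA j (p + 3*j + 2) [true, true] [true]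
    exact rch_of_eq rfl (cfg_congr (by push_cast; ring) rfl rfl) h
  have u1 := rch_left hA1 (p+2) true [true] (P j [true])
  have u2 := rch_left hC1 (p+2-1) true [] (true :: P j [true])
  have u3 : Rch (cfg 4 (p+2-1-1) [] (true :: false :: true :: P j [true]))
      (cfg 0 (p+2-1-1-1) [] (false :: false :: false :: true :: P j [true])) := by
    rw [pad_l 4 (p+2-1-1) []]
    exact rch_left hE1 (p+2-1-1) false [] (false :: true :: P j [true])
  have u4 := rch_right hA0 (p+2-1-1-1) [] (false :: false :: true :: P j [true])
  have u5 := rch_right hB0 (p+2-1-1-1+1) [true] (false :: true :: P j [true])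
  have u6 := rch_right hC0 (p+2-1-1-1+1+1) [true, true] (true :: P j [true])
  have u7 : Rch (cfg 3 (p+2-1-1-1+1+1+1) [true, true, true] (true :: P j [true]))
      (cfg 3 (p+2-1-1-1+1+1+1-3) [] (rep 3 ++ (true :: P j [true]))) := by
    have h := skimD 3 (p+2-1-1-1+1+1+1) [] (P j [true])
    refine rch_of_eq (cfg_congr rfl (by simp [List.replicate]) rfl)
      (cfg_congr (by push_cast; ring) rfl rfl) h
  have u8 : Rch (cfg 3 (p+2-1-1-1+1+1+1-3) [] (rep 3 ++ (true :: P j [true])))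
      (cfg 3 (p+2-1-1-1+1+1+1-3-1) [] (false :: (true :: (rep 2 ++ (true :: P j [true]))))) := by
    rw [pad_l 3 (p+2-1-1-1+1+1+1-3) []]
    have h := rch_left hD1 (p+2-1-1-1+1+1+1-3) false [] (rep 2 ++ (true :: P j [true]))
    refine rch_of_eq (cfg_congr rfl rfl (by simp [List.replicate_succ])) rfl h
  have u9 : Rch (cfg 3 (p+2-1-1-1+1+1+1-3-1) [] (false :: (true :: (rep 2 ++ (true :: P j [true])))))
      (cfg 0 (p+2-1-1-1+1+1+1-3-1-1) [] (false :: (true :: (true :: (rep 2 ++ (true :: P j [true])))))) := by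
    rw [pad_l 3 (p+2-1-1-1+1+1+1-3-1) []]
    exact rch_left hD0 (p+2-1-1-1+1+1+1-3-1) false [] (true :: (rep 2 ++ (true :: P j [true])))
  have sall := ((((((((t1.trans t2).trans u1).trans u2).trans u3).trans u4).trans u5).trans
    u6).trans u7).trans ((u8).trans u9)
  refine rch_of_eq rfl (cfg_congr (by ring) rfl ?_) sall
  obtain ⟨m, rfl⟩ : ∃ m, j = m + 1 := ⟨j - 1, by omega⟩
  rw [← P_block m [true]]
  simp [List.replicate]


lemma FK1 (p : ℤ) (j : ℕ) : Rch (Fc p (3*j+1)) (Kc (p-3) 3 j) := by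
  have t1 : Rch (Fc p (3*j+1))
      (cfg 0 (p + (3*j+1) + 2) (rep (3*(j+1)) ++ []) [true, true]) := by
    have h := Fturn p (3*j+1)
    refine rch_of_eq rfl (cfg_congr (by push_cast; ring) ?_ rfl) h
    rw [rep_shift, show 3*(j+1) = (3*j+1)+2 from by ring, rep_add]
    simp only [rep_add, List.append_assoc, List.append_nil]
    norm_num [List.replicate]
  have t2 : Rch (cfg 0 (p + (3*j+1) + 2) (rep (3*(j+1)) ++ []) [true, true])
      (cfg 0 p [] (true :: P (j+1) [true])) := by
    have h := loopA (j+1) (p + (3*j+1) + 2) [] [true]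
    exact rch_of_eq rfl (cfg_congr (by push_cast; ring) rfl rfl) h
  have v1 : Rch (cfg 0 p [] (true :: P (j+1) [true]))
      (cfg 2 (p-1) [] (false :: true :: P (j+1) [true])) := by
    rw [pad_l 0 p []]
    exact rch_left hA1 p false [] (P (j+1) [true])
  have v2 := rch_right hC0 (p-1) [] (true :: P (j+1) [true])
  have v3 := rch_left hD1 (p-1+1) true [] (P (j+1) [true])
  have v4 : Rch (cfg 3 (p-1+1-1) [] (true :: true :: P (j+1) [true]))
      (cfg 3 (p-1+1-1-1) [] (false :: true :: (true :: P (j+1) [true]))) := by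
    rw [pad_l 3 (p-1+1-1) []]
    exact rch_left hD1 (p-1+1-1) false [] (true :: P (j+1) [true])
  have v5 : Rch (cfg 3 (p-1+1-1-1) [] (false :: true :: (true :: P (j+1) [true])))
      (cfg 0 (p-1+1-1-1-1) [] (false :: true :: (true :: (true :: P (j+1) [true])))) := by
    rw [pad_l 3 (p-1+1-1-1) []]
    exact rch_left hD0 (p-1+1-1-1) false [] (true :: (true :: P (j+1) [true]))
  have sall := ((((((t1.trans t2).trans v1).trans v2).trans v3).trans v4).trans v5)
  refine rch_of_eq rfl (cfg_congr (by ring) rfl ?_) sall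
  rw [← P_block j [true]]
  simp [List.replicate, Kc]

lemma FK2 (p : ℤ) (j : ℕ) :
    Rch (Fc p (3*j+2)) (cfg 4 (p-1) [] (false :: false :: (true :: P (j+1) [true]))) := by
  have t1 : Rch (Fc p (3*j+2))
      (cfg 0 (p + (3*j+2) + 2) (rep (3*(j+1)) ++ [true]) [true, true]) := by
    have h := Fturn p (3*j+2)
    refine rch_of_eq rfl (cfg_congr (by push_cast; ring) ?_ rfl) h
    rw [rep_shift, show 3*(j+1) = (3*j+2)+1 from by ring, rep_add]
    simp [List.replicate]
    rw [← rep_shift, ← rep_shift, ← rep_shift]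
  have t2 : Rch (cfg 0 (p + (3*j+2) + 2) (rep (3*(j+1)) ++ [true]) [true, true])
      (cfg 0 (p+1) [true] (true :: P (j+1) [true])) := by
    have h := loopA (j+1) (p + (3*j+2) + 2) [true] [true]
    exact rch_of_eq rfl (cfg_congr (by push_cast; ring) rfl rfl) h
  have w1 := rch_left hA1 (p+1) true [] (P (j+1) [true])
  have w2 : Rch (cfg 2 (p+1-1) [] (true :: true :: P (j+1) [true]))
      (cfg 4 (p+1-1-1) [] (false :: false :: (true :: P (j+1) [true]))) := by
    rw [pad_l 2 (p+1-1) []]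
    exact rch_left hC1 (p+1-1) false [] (true :: P (j+1) [true])
  have sall := ((t1.trans t2).trans w1).trans w2
  exact rch_of_eq rfl (cfg_congr (by ring) rfl rfl) sall

-- composed F → F rules
def RF (N N' : ℕ) : Prop := ∀ p : ℤ, ∃ p' : ℤ, Rch (Fc p N) (Fc p' N')

lemma RF.trans {a b c : ℕ} (h1 : RF a b) (h2 : RF b c) : RF a c := by
  intro p
  obtain ⟨p1, h1⟩ := h1 p
  obtain ⟨p2, h2⟩ := h2 p1
  exact ⟨p2, h1.trans h2⟩

lemma RF_of_eq {a b a' b' : ℕ} (h : RF a b) (ha : a = a') (hb : b = b') : RF a' b' :=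
  ha ▸ hb ▸ h

lemma RF0 (m : ℕ) : RF (3*(m+1)) (5*(m+1)+6) := by
  intro p
  refine ⟨p - 3 - 2*(m+1), ?_⟩
  have h1 := FK0 p (m+1) (by omega)
  have h2 := Kiter (m+1-1) (p-3) 5
  rw [show m+1-1 = m from rfl] at h2
  refine (h1.trans (rch_of_eq rfl ?_ h2))
  exact cfg_congr (by push_cast; ring) rfl (by rw [show 5+5*m+6 = 5*(m+1)+6 from by ring])

lemma RF1 (j : ℕ) : RF (3*j+1) (5*j+9) := by
  intro p
  refine ⟨p - 3 - 2*(j+1), ?_⟩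
  have h1 := FK1 p j
  have h2 := Kiter j (p-3) 3
  refine (h1.trans (rch_of_eq rfl ?_ h2))
  exact cfg_congr (by push_cast; ring) rfl (by rw [show 3+5*j+6 = 5*j+9 from by ring])

lemma chainF : RF 6 12284 := by
  have c1 : RF 6 16 := RF_of_eq (RF0 1) (by norm_num) (by norm_num)
  have c2 : RF 16 34 := RF_of_eq (RF1 5) (by norm_num) (by norm_num)
  have c3 : RF 34 64 := RF_of_eq (RF1 11) (by norm_num) (by norm_num)
  have c4 : RF 64 114 := RF_of_eq (RF1 21) (by norm_num) (by norm_num)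
  have c5 : RF 114 196 := RF_of_eq (RF0 37) (by norm_num) (by norm_num)
  have c6 : RF 196 334 := RF_of_eq (RF1 65) (by norm_num) (by norm_num)
  have c7 : RF 334 564 := RF_of_eq (RF1 111) (by norm_num) (by norm_num)
  have c8 : RF 564 946 := RF_of_eq (RF0 187) (by norm_num) (by norm_num)
  have c9 : RF 946 1584 := RF_of_eq (RF1 315) (by norm_num) (by norm_num)
  have c10 : RF 1584 2646 := RF_of_eq (RF0 527) (by norm_num) (by norm_num)
  have c11 : RF 2646 4416 := RF_of_eq (RF0 881) (by norm_num) (by norm_num)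
  have c12 : RF 4416 7366 := RF_of_eq (RF0 1471) (by norm_num) (by norm_num)
  have c13 : RF 7366 12284 := RF_of_eq (RF1 2455) (by norm_num) (by norm_num)
  exact c1.trans (c2.trans (c3.trans (c4.trans (c5.trans (c6.trans (c7.trans (c8.trans
    (c9.trans (c10.trans (c11.trans (c12.trans c13)))))))))))

lemma init_eq : initCfg (0 : Fin 5) = cfg 0 0 [] [] := by
  unfold initCfg cfg
  congr 1
  funext i
  simp [listTape, List.getD]

lemma init_to_F6 : Rch (initCfg (0 : Fin 5)) (Fc (-3) 6) := by
  rw [init_eq, pad_r 0 0 [] [], pad_r, pad_r, pad_r]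
  have e0 : (([] : List Bool) ++ [false]) ++ [false] ++ [false] ++ [false]
      = false :: [false, false, false] := by simp
  rw [e0]
  have i1 := rch_right hA0 0 [] [false, false, false]
  have i2 := rch_right hB0 (0+1) [true] [false, false]
  have i3 := rch_right hC0 (0+1+1) [true, true] [false]
  have i4 := rch_left hD0 (0+1+1+1) true [true, true] []
  have i5 := rch_left hA1 (0+1+1+1-1) true [true] [true]
  have i6 := rch_left hC1 (0+1+1+1-1-1) true [] [true, true]
  have i7 : Rch (cfg 4 (0+1+1+1-1-1-1) [] [true, false, true, true])
      (cfg 0 (0+1+1+1-1-1-1-1) [] [false, false, false, true, true]) := by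
    rw [pad_l 4 (0+1+1+1-1-1-1) []]
    exact rch_left hE1 (0+1+1+1-1-1-1) false [] [false, true, true]
  have i8 := rch_right hA0 (0+1+1+1-1-1-1-1) [] [false, false, true, true]
  have i9 := rch_right hB0 (0+1+1+1-1-1-1-1+1) [true] [false, true, true]
  have i10 := rch_right hC0 (0+1+1+1-1-1-1-1+1+1) [true, true] [true, true]
  have i11 := rch_left hD1 (0+1+1+1-1-1-1-1+1+1+1) true [true, true] [true]
  have i12 := rch_left hD1 (0+1+1+1-1-1-1-1+1+1+1-1) true [true] [true, true]
  have i13 := rch_left hD1 (0+1+1+1-1-1-1-1+1+1+1-1-1) true [] [true, true, true]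
  have i14 : Rch (cfg 3 (0+1+1+1-1-1-1-1+1+1+1-1-1-1) [] [true, true, true, true, true])
      (cfg 3 (0+1+1+1-1-1-1-1+1+1+1-1-1-1-1) []
        [false, true, true, true, true, true]) := by
    rw [pad_l 3 (0+1+1+1-1-1-1-1+1+1+1-1-1-1) []]
    exact rch_left hD1 (0+1+1+1-1-1-1-1+1+1+1-1-1-1) false [] [true, true, true, true]
  have i15 : Rch (cfg 3 (0+1+1+1-1-1-1-1+1+1+1-1-1-1-1) []
        [false, true, true, true, true, true])
      (cfg 0 (0+1+1+1-1-1-1-1+1+1+1-1-1-1-1-1) []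
        [false, true, true, true, true, true, true]) := by
    rw [pad_l 3 (0+1+1+1-1-1-1-1+1+1+1-1-1-1-1) []]
    exact rch_left hD0 (0+1+1+1-1-1-1-1+1+1+1-1-1-1-1) false []
      [true, true, true, true, true]
  have sall := ((((((((((((((i1.trans i2).trans i3).trans i4).trans i5).trans i6).trans
    i7).trans i8).trans i9).trans i10).trans i11).trans i12).trans i13).trans i14).trans i15)
  refine rch_of_eq rfl (cfg_congr (by norm_num) rfl ?_) sall
  show false :: rep 6 = _
  simp [List.replicate]

lemma getD_default (l : List Bool) (n : ℕ) (h : l.length ≤ n) : l.getD n false = false := by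
  induction l generalizing n with
  | nil => cases n <;> simp [List.getD]
  | cons a t ih =>
    cases n with
    | zero => simp at h
    | succ m => rw [List.getD_cons_succ]; exact ih m (by simpa using h)

lemma getD_true_lt {w : List Bool} {n : ℕ} (h : w.getD n false = true) : n < w.length := by
  by_contra hc
  rw [getD_default w n (by omega)] at h
  exact absurd h (by simp)

lemma tape_word (p : ℤ) (w : List Bool) (h0 : w.getD 0 false = true)
    (hl : w.getLastD false = true) :
    TapeWord (listTape p [] (false :: false :: w)) w := by
  refine ⟨p + 2, ?_, ?_, fun _ => ⟨h0, hl⟩⟩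
  · intro k hk
    show w.getD k false = listTape p [] (false :: false :: w) (p + 2 + k)
    unfold listTape
    rw [if_neg (by omega), show (p + 2 + (k : ℤ) - p).toNat = k + 2 from by omega]
    rw [List.getD_cons_succ, List.getD_cons_succ]
  · intro j hj
    unfold listTape at hj
    by_cases hjp : j < p
    · rw [if_pos hjp] at hj
      simp [List.getD] at hj
    · rw [if_neg hjp] at hj
      have h2 : 2 ≤ (j - p).toNat := by
        by_contra hc
        push_neg at hc
        interval_cases h : (j - p).toNat
        · exact absurd hj (by simp)
        · exact absurd hj (by simp)
      rw [show (j - p).toNat = ((j - p).toNat - 2) + 2 from by omega,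
        List.getD_cons_succ, List.getD_cons_succ] at hj
      have hlt := getD_true_lt hj
      constructor <;> omega

lemma count_final : (true :: P 4095 [true]).count true = 4097 := by
  have h1 : (P 4095 [true]).count true = 4095 + ([true] : List Bool).count true :=
    count_P _ _
  simp [List.count_cons, h1]

lemma last_final : (true :: P 4095 [true]).getLastD false = true := by
  have hw : ∀ n : ℕ, P n [true] = P n [] ++ [true] := fun n => by
    simpa using P_append n [] [true]
  rw [hw, show true :: (P 4095 [] ++ [true]) = (true :: P 4095 []) ++ [true] from rfl,
    List.getLastD_concat]

/-- BB(5) ≥ 4097: there exists a Turing machine with at most 5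
states (in the model without a separate halting state) that halts on the
all-zero tape with a computed word containing at least 4097 ones. -/
theorem busy_beaver_5_lower_bound :
    ∃ (f : Fin 5 × Bool → Option (Fin 5 × Bool × Dir)) (w : List Bool) (t : ℕ),
      Computes f 0 w t ∧ 4097 ≤ w.count true := by
  obtain ⟨p', r2⟩ := chainF (-3)
  have r3 : Rch (Fc p' 12284) (cfg 4 (p'-1) [] (false :: false :: (true :: P 4095 [true]))) := by
    have h := FK2 p' 4094
    exact rch_of_eq (by norm_num) rfl h
  obtain ⟨t, ht⟩ := (init_to_F6.trans r2).trans r3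
  refine ⟨M, true :: P 4095 [true], t, ⟨_, ht, ?_, ?_⟩, by rw [count_final]⟩
  · show M (4, listTape (p'-1) [] (false :: false :: (true :: P 4095 [true])) (p'-1)) = none
    rw [listTape_read]
    rfl
  · exact tape_word (p'-1) _ rfl last_final
end
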